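/- arXiv:2507.23199 — 4 statements merged into one kernel-verified Lean document; each statement's English description precedes it below -/
import Mathlib

section
/- There exists a constant β ∈ ℝ (depending only on J and F) such that for any two solutions u, v : [0,∞) → ℝ^J of the Lorenz 96 equation with ‖u(0)‖ ≤ ρ and v(0) ∈ ℝ^J arbitrary, one has ‖u(t) − v(t)‖² ≤ ‖u(0) − v(0)‖²·e^{2βt} for all t ≥ 0, where ρ = √(2J)·|F|. -/
open scoped InnerProductSpace
open Finset

/-- The Lorenz 96 vector field on `ℝ^J` with external forcing `F`,
with coordinates indexed cyclically modulo `J`. -/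
noncomputable def lorenz96 (J : ℕ) [NeZero J] (F : ℝ)
    (u : EuclideanSpace ℝ (Fin J)) : EuclideanSpace ℝ (Fin J) :=
  WithLp.toLp 2 fun j => (u (j + 1) - u (j - 2)) * u (j - 1) - u j + F

section Aux

variable {J : ℕ} [NeZero J]

private lemma shift_sum' (c : Fin J) (f : Fin J → ℝ) : ∑ j, f (j + c) = ∑ j, f j :=
  Fintype.sum_equiv (Equiv.addRight c) _ _ (fun _ => rfl)

private lemma cubic_cancel' (w : Fin J → ℝ) :
    ∑ j, (w (j + 1) - w (j - 2)) * w (j - 1) * w j = 0 := by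
  have h1 : ∑ j : Fin J, w (j + 1) * w (j - 1) * w j
      = ∑ j : Fin J, w j * w (j - 2) * w (j - 1) := by
    apply Fintype.sum_equiv (Equiv.addRight (1 : Fin J))
    intro j
    simp only [Equiv.coe_addRight]
    have e1 : (j + 1 : Fin J) - 2 = j - 1 := by open Fin.CommRing in ring
    have e2 : (j + 1 : Fin J) - 1 = j := by open Fin.CommRing in ring
    rw [e1, e2]
  have h2 : ∑ j : Fin J, (w (j + 1) - w (j - 2)) * w (j - 1) * w j
      = ∑ j : Fin J, w (j + 1) * w (j - 1) * w j
        - ∑ j : Fin J, w j * w (j - 2) * w (j - 1) := by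
    rw [← Finset.sum_sub_distrib]; exact Finset.sum_congr rfl (fun j _ => by ring)
  rw [h2, h1, sub_self]

private lemma norm_sq_sum' (u : EuclideanSpace ℝ (Fin J)) : ‖u‖ ^ 2 = ∑ j, (u j) ^ 2 := by
  rw [EuclideanSpace.norm_eq, Real.sq_sqrt (by positivity)]
  simp [sq]

private lemma coord_le_norm' (u : EuclideanSpace ℝ (Fin J)) (i : Fin J) : |u i| ≤ ‖u‖ := by
  have h : |u i| = Real.sqrt ((u i) ^ 2) := (Real.sqrt_sq_eq_abs _).symm
  have h2 : ‖u‖ = Real.sqrt (∑ j, (u j) ^ 2) := by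
    rw [← norm_sq_sum' u, Real.sqrt_sq (norm_nonneg u)]
  rw [h, h2]
  apply Real.sqrt_le_sqrt
  exact Finset.single_le_sum (f := fun j => (u j) ^ 2) (fun j _ => by positivity) (mem_univ i)

private lemma cross_bound' (c d : Fin J) (w : Fin J → ℝ) :
    ∑ j, |w (j + c)| * |w (j + d)| ≤ ∑ j, (w j)^2 := by
  have h : ∀ j : Fin J, |w (j + c)| * |w (j + d)| ≤ ((w (j+c))^2 + (w (j+d))^2)/2 := by
    intro j
    nlinarith [sq_nonneg (|w (j+c)| - |w (j+d)|), sq_abs (w (j+c)), sq_abs (w (j+d))]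
  calc ∑ j, |w (j + c)| * |w (j + d)| ≤ ∑ j, ((w (j+c))^2 + (w (j+d))^2)/2 :=
        Finset.sum_le_sum (fun j _ => h j)
    _ = ((∑ j, (w (j+c))^2) + ∑ j, (w (j+d))^2)/2 := by
        rw [← Finset.sum_add_distrib, ← Finset.sum_div]
    _ = ∑ j, (w j)^2 := by
        rw [shift_sum' c (fun j => (w j)^2), shift_sum' d (fun j => (w j)^2)]; ring

private lemma inner_self_bound' (F : ℝ) (u : EuclideanSpace ℝ (Fin J)) :
    2 * ⟪u, lorenz96 J F u⟫_ℝ + ‖u‖ ^ 2 ≤ J * F ^ 2 := by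
  have hin : ⟪u, lorenz96 J F u⟫_ℝ
      = (∑ j, (u (j+1) - u (j-2)) * u (j-1) * u j) + ∑ j, (F * u j - (u j)^2) := by
    simp only [PiLp.inner_apply, RCLike.inner_apply, conj_trivial, lorenz96, PiLp.toLp_apply]
    rw [← Finset.sum_add_distrib]
    exact Finset.sum_congr rfl (fun j _ => by ring)
  rw [hin, cubic_cancel', zero_add, norm_sq_sum']
  calc 2 * (∑ j, (F * u j - (u j)^2)) + ∑ j, (u j)^2
      = ∑ j : Fin J, (2*(F * u j - (u j)^2) + (u j)^2) := by
        rw [Finset.mul_sum, ← Finset.sum_add_distrib]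
    _ ≤ ∑ _j : Fin J, F^2 := Finset.sum_le_sum (fun j _ => by nlinarith [sq_nonneg (F - u j)])
    _ = J * F^2 := by simp [Finset.card_univ, mul_comm]

private lemma key_bound' (F : ℝ) (u v : EuclideanSpace ℝ (Fin J)) :
    ⟪u - v, lorenz96 J F u - lorenz96 J F v⟫_ℝ ≤ 4 * ‖u‖ * ‖u - v‖ ^ 2 := by
  set M := ‖u‖ with hMdef
  have hM0 : 0 ≤ M := norm_nonneg u
  set w : Fin J → ℝ := fun j => u j - v j with hw
  have habs : ∀ x y : ℝ, |x| ≤ M → x * y ≤ M * |y| := by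
    intro x y hx
    calc x * y ≤ |x * y| := le_abs_self _
      _ = |x| * |y| := abs_mul _ _
      _ ≤ M * |y| := mul_le_mul_of_nonneg_right hx (abs_nonneg _)
  have hterm : ∀ j : Fin J, w j * (lorenz96 J F u j - lorenz96 J F v j)
      = (u (j+1) * (w (j-1) * w j) + (-(u (j-2))) * (w (j-1) * w j)
          + u (j-1) * (w (j+1) * w j) + (-(u (j-1))) * (w (j-2) * w j))
        - (w (j+1) - w (j-2)) * w (j-1) * w j - (w j)^2 := by
    intro j; simp only [lorenz96, hw, PiLp.toLp_apply]; ring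
  have hin : ⟪u - v, lorenz96 J F u - lorenz96 J F v⟫_ℝ
      = ∑ j, w j * (lorenz96 J F u j - lorenz96 J F v j) := by
    simp only [PiLp.inner_apply, RCLike.inner_apply, conj_trivial, PiLp.sub_apply, hw]
    exact Finset.sum_congr rfl (fun j _ => mul_comm _ _)
  have hbnd : ∀ j : Fin J,
      u (j+1) * (w (j-1) * w j) + (-(u (j-2))) * (w (j-1) * w j)
        + u (j-1) * (w (j+1) * w j) + (-(u (j-1))) * (w (j-2) * w j)
      ≤ M * (|w (j-1)| * |w j|) + M * (|w (j-1)| * |w j|)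
        + M * (|w (j+1)| * |w j|) + M * (|w (j-2)| * |w j|) := by
    intro j
    have a1 := habs (u (j+1)) (w (j-1) * w j) (coord_le_norm' u (j+1))
    have a2 := habs (-(u (j-2))) (w (j-1) * w j) (by rw [abs_neg]; exact coord_le_norm' u _)
    have a3 := habs (u (j-1)) (w (j+1) * w j) (coord_le_norm' u _)
    have a4 := habs (-(u (j-1))) (w (j-2) * w j) (by rw [abs_neg]; exact coord_le_norm' u _)
    rw [abs_mul] at a1 a2 a3 a4
    exact add_le_add (add_le_add (add_le_add a1 a2) a3) a4
  have c1 : ∑ j : Fin J, |w (j - 1)| * |w j| ≤ ∑ j, (w j)^2 := by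
    simpa [sub_eq_add_neg] using cross_bound' (-1 : Fin J) 0 w
  have c2 : ∑ j : Fin J, |w (j + 1)| * |w j| ≤ ∑ j, (w j)^2 := by
    simpa using cross_bound' (1 : Fin J) 0 w
  have c3 : ∑ j : Fin J, |w (j - 2)| * |w j| ≤ ∑ j, (w j)^2 := by
    simpa [sub_eq_add_neg] using cross_bound' (-2 : Fin J) 0 w
  have hwn : ‖u - v‖ ^ 2 = ∑ j, (w j)^2 := by
    rw [norm_sq_sum']
    exact Finset.sum_congr rfl (fun j _ => by simp [hw, PiLp.sub_apply])
  have hS0 : 0 ≤ ∑ j, (w j)^2 := Finset.sum_nonneg (fun j _ => sq_nonneg _)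
  calc ⟪u - v, lorenz96 J F u - lorenz96 J F v⟫_ℝ
      = ∑ j, w j * (lorenz96 J F u j - lorenz96 J F v j) := hin
    _ = (∑ j : Fin J, (u (j+1) * (w (j-1) * w j) + (-(u (j-2))) * (w (j-1) * w j)
          + u (j-1) * (w (j+1) * w j) + (-(u (j-1))) * (w (j-2) * w j)))
        - (∑ j : Fin J, (w (j+1) - w (j-2)) * w (j-1) * w j) - ∑ j, (w j)^2 := by
        rw [← Finset.sum_sub_distrib, ← Finset.sum_sub_distrib]
        exact Finset.sum_congr rfl (fun j _ => hterm j)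
    _ ≤ (∑ j : Fin J, (u (j+1) * (w (j-1) * w j) + (-(u (j-2))) * (w (j-1) * w j)
          + u (j-1) * (w (j+1) * w j) + (-(u (j-1))) * (w (j-2) * w j))) := by
        rw [cubic_cancel' w]
        linarith
    _ ≤ ∑ j : Fin J, (M * (|w (j-1)| * |w j|) + M * (|w (j-1)| * |w j|)
          + M * (|w (j+1)| * |w j|) + M * (|w (j-2)| * |w j|)) :=
        Finset.sum_le_sum (fun j _ => hbnd j)
    _ = M * (∑ j : Fin J, |w (j-1)| * |w j|) + M * (∑ j : Fin J, |w (j-1)| * |w j|)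
          + M * (∑ j : Fin J, |w (j+1)| * |w j|) + M * (∑ j : Fin J, |w (j-2)| * |w j|) := by
        simp [Finset.sum_add_distrib, Finset.mul_sum]
    _ ≤ M * (∑ j, (w j)^2) + M * (∑ j, (w j)^2) + M * (∑ j, (w j)^2) + M * (∑ j, (w j)^2) := by
        gcongr
    _ = 4 * M * ‖u - v‖ ^ 2 := by rw [hwn]; ring

private lemma deriv_norm_sq' {E : Type*} [NormedAddCommGroup E] [InnerProductSpace ℝ E]
    (u : ℝ → E) (f : E) (t : ℝ) (hu : HasDerivAt u f t) :
    HasDerivAt (fun s => ‖u s‖ ^ 2) (2 * ⟪u t, f⟫_ℝ) t := by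
  have h := (hu.inner ℝ hu : HasDerivAt (fun s => ⟪u s, u s⟫_ℝ) _ t)
  have e : ∀ s, ⟪u s, u s⟫_ℝ = ‖u s‖ ^ 2 := fun s => real_inner_self_eq_norm_sq _
  simp only [e] at h
  rw [real_inner_comm (u t) f, ← two_mul] at h; exact h

private lemma antitone_aux (f : ℝ → ℝ)
    (hf : ∀ t : ℝ, 0 ≤ t → ∃ d : ℝ, HasDerivAt f d t ∧ d ≤ 0) :
    AntitoneOn f (Set.Ici 0) := by
  apply antitoneOn_of_deriv_nonpos (convex_Ici 0)
  · intro t ht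
    obtain ⟨d, hd, _⟩ := hf t ht
    exact hd.continuousAt.continuousWithinAt
  · intro t ht
    rw [interior_Ici] at ht
    obtain ⟨d, hd, _⟩ := hf t (le_of_lt ht)
    exact hd.differentiableAt.differentiableWithinAt
  · intro t ht
    rw [interior_Ici] at ht
    obtain ⟨d, hd, hd0⟩ := hf t (le_of_lt ht)
    rw [hd.deriv]; exact hd0

/-- A priori bound: the ball of radius `√(2J)|F|` is forward invariant. -/
private lemma apriori' (F : ℝ) (u : ℝ → EuclideanSpace ℝ (Fin J))
    (hu : ∀ t : ℝ, 0 ≤ t → HasDerivAt u (lorenz96 J F (u t)) t)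
    (h0 : ‖u 0‖ ≤ Real.sqrt (2 * J) * |F|) :
    ∀ t : ℝ, 0 ≤ t → ‖u t‖ ≤ Real.sqrt (2 * J) * |F| := by
  set ρ := Real.sqrt (2 * J) * |F| with hρdef
  have hρ0 : 0 ≤ ρ := by positivity
  have hρsq : ρ ^ 2 = 2 * J * F ^ 2 := by
    rw [hρdef, mul_pow, Real.sq_sqrt (by positivity), sq_abs]
  set φ : ℝ → ℝ := fun t => (‖u t‖ ^ 2 - ρ ^ 2) * Real.exp t with hφ
  have hmono : AntitoneOn φ (Set.Ici 0) := by
    apply antitone_aux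
    intro t ht
    have hnu : HasDerivAt (fun s => ‖u s‖ ^ 2) (2 * ⟪u t, lorenz96 J F (u t)⟫_ℝ) t :=
      deriv_norm_sq' u _ t (hu t ht)
    refine ⟨_, ((hnu.sub_const (ρ ^ 2)).mul (Real.hasDerivAt_exp t)), ?_⟩
    have hb := inner_self_bound' F (u t)
    have he : (0:ℝ) < Real.exp t := Real.exp_pos t
    have hJ0 : (0:ℝ) ≤ (J : ℝ) := Nat.cast_nonneg J
    have h1 : 2 * ⟪u t, lorenz96 J F (u t)⟫_ℝ + (‖u t‖ ^ 2 - ρ ^ 2) ≤ 0 := by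
      have : (J : ℝ) * F ^ 2 ≤ ρ ^ 2 := by rw [hρsq]; nlinarith [sq_nonneg F]
      linarith
    calc 2 * ⟪u t, lorenz96 J F (u t)⟫_ℝ * Real.exp t + (‖u t‖ ^ 2 - ρ ^ 2) * Real.exp t
        = (2 * ⟪u t, lorenz96 J F (u t)⟫_ℝ + (‖u t‖ ^ 2 - ρ ^ 2)) * Real.exp t := by ring
      _ ≤ 0 := mul_nonpos_of_nonpos_of_nonneg h1 he.le
  intro t ht
  have hφt : φ t ≤ φ 0 := hmono (Set.self_mem_Ici) ht ht
  have hφ0 : φ 0 ≤ 0 := by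
    have : ‖u 0‖ ^ 2 ≤ ρ ^ 2 := by
      have := pow_le_pow_left₀ (norm_nonneg (u 0)) h0 2
      simpa using this
    simp only [hφ, Real.exp_zero, mul_one]
    linarith
  have he : (0:ℝ) < Real.exp t := Real.exp_pos t
  have hsq : ‖u t‖ ^ 2 ≤ ρ ^ 2 := by
    have h2 : (‖u t‖ ^ 2 - ρ ^ 2) * Real.exp t ≤ 0 := le_trans hφt hφ0
    nlinarith
  calc ‖u t‖ = Real.sqrt (‖u t‖ ^ 2) := (Real.sqrt_sq (norm_nonneg _)).symm
    _ ≤ Real.sqrt (ρ ^ 2) := Real.sqrt_le_sqrt hsq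
    _ = ρ := Real.sqrt_sq hρ0

end Aux

theorem lorenz96_exponential_divergence (J : ℕ) [NeZero J] (hJ : 4 ≤ J) (F : ℝ) :
    ∃ β : ℝ, ∀ (u v : ℝ → EuclideanSpace ℝ (Fin J)),
      (∀ t : ℝ, 0 ≤ t → HasDerivAt u (lorenz96 J F (u t)) t) →
      (∀ t : ℝ, 0 ≤ t → HasDerivAt v (lorenz96 J F (v t)) t) →
      ‖u 0‖ ≤ Real.sqrt (2 * J) * |F| →
      ∀ t : ℝ, 0 ≤ t →
        ‖u t - v t‖ ^ 2 ≤ ‖u 0 - v 0‖ ^ 2 * Real.exp (2 * β * t) := by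
  set ρ := Real.sqrt (2 * J) * |F| with hρdef
  have hρ0 : 0 ≤ ρ := by positivity
  refine ⟨4 * ρ, ?_⟩
  set β := 4 * ρ with hβdef
  intro u v hu hv h0 t ht
  have hap := apriori' F u hu h0
  set ψ : ℝ → ℝ := fun s => ‖u s - v s‖ ^ 2 * Real.exp (-(2 * β) * s) with hψ
  have hmono : AntitoneOn ψ (Set.Ici 0) := by
    apply antitone_aux
    intro s hs
    have hw : HasDerivAt (fun r => u r - v r) (lorenz96 J F (u s) - lorenz96 J F (v s)) s :=
      (hu s hs).sub (hv s hs)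
    have hnw : HasDerivAt (fun r => ‖u r - v r‖ ^ 2)
        (2 * ⟪u s - v s, lorenz96 J F (u s) - lorenz96 J F (v s)⟫_ℝ) s :=
      deriv_norm_sq' (fun r => u r - v r) _ s hw
    have hexp : HasDerivAt (fun r : ℝ => Real.exp (-(2 * β) * r))
        (Real.exp (-(2 * β) * s) * (-(2 * β))) s := by
      have h1 : HasDerivAt (fun r : ℝ => -(2 * β) * r) (-(2 * β)) s := by
        simpa using (hasDerivAt_id s).const_mul (-(2 * β))
      exact h1.exp
    refine ⟨_, hnw.mul hexp, ?_⟩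
    have hkb := key_bound' F (u s) (v s)
    have hus : ‖u s‖ ≤ ρ := hap s hs
    have hip : ⟪u s - v s, lorenz96 J F (u s) - lorenz96 J F (v s)⟫_ℝ
        ≤ β * ‖u s - v s‖ ^ 2 := by
      calc ⟪u s - v s, lorenz96 J F (u s) - lorenz96 J F (v s)⟫_ℝ
          ≤ 4 * ‖u s‖ * ‖u s - v s‖ ^ 2 := hkb
        _ ≤ 4 * ρ * ‖u s - v s‖ ^ 2 := by
            apply mul_le_mul_of_nonneg_right _ (sq_nonneg _)
            linarith
        _ = β * ‖u s - v s‖ ^ 2 := by rw [hβdef]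
    have he : (0:ℝ) < Real.exp (-(2 * β) * s) := Real.exp_pos _
    calc 2 * ⟪u s - v s, lorenz96 J F (u s) - lorenz96 J F (v s)⟫_ℝ
            * Real.exp (-(2 * β) * s)
          + ‖u s - v s‖ ^ 2 * (Real.exp (-(2 * β) * s) * (-(2 * β)))
        = (2 * ⟪u s - v s, lorenz96 J F (u s) - lorenz96 J F (v s)⟫_ℝ
            - 2 * β * ‖u s - v s‖ ^ 2) * Real.exp (-(2 * β) * s) := by ring
      _ ≤ 0 := mul_nonpos_of_nonpos_of_nonneg (by linarith) he.le
  have hψt : ψ t ≤ ψ 0 := hmono (Set.self_mem_Ici) ht ht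
  have hψ0 : ψ 0 = ‖u 0 - v 0‖ ^ 2 := by simp [hψ]
  rw [hψ0] at hψt
  have hmul := mul_le_mul_of_nonneg_right hψt (Real.exp_pos (2 * β * t)).le
  calc ‖u t - v t‖ ^ 2
      = ‖u t - v t‖ ^ 2 * (Real.exp (-(2 * β) * t) * Real.exp (2 * β * t)) := by
        rw [← Real.exp_add]
        simp
    _ = ψ t * Real.exp (2 * β * t) := by rw [hψ]; ring
    _ ≤ ‖u 0 - v 0‖ ^ 2 * Real.exp (2 * β * t) := hmul
end

section
/- Let P be a symmetric positive semidefinite J×J real matrix, R a symmetric positive definite d×d real matrix, and H a d×J real matrix. Then the matrices HPHᵀ + R and I_J + PHᵀR⁻¹H are invertible, and PHᵀ(HPHᵀ + R)⁻¹ = (I_J + PHᵀR⁻¹H)⁻¹ PHᵀR⁻¹. Consequently, for any v ∈ ℝ^J and y ∈ ℝ^d, the vector v_a = v + PHᵀ(HPHᵀ + R)⁻¹(y − Hv) satisfies (I_J + PHᵀR⁻¹H)·v_a = v + PHᵀR⁻¹y. -/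
open Matrix

theorem kalman_gain_identity (J d : ℕ) (hJ : 0 < J) (hd : 0 < d)
    (P : Matrix (Fin J) (Fin J) ℝ) (hP : P.PosSemidef)
    (R : Matrix (Fin d) (Fin d) ℝ) (hR : R.PosDef)
    (H : Matrix (Fin d) (Fin J) ℝ) :
    IsUnit (H * P * Hᵀ + R) ∧
    IsUnit (1 + P * Hᵀ * R⁻¹ * H) ∧
    P * Hᵀ * (H * P * Hᵀ + R)⁻¹ = (1 + P * Hᵀ * R⁻¹ * H)⁻¹ * (P * Hᵀ * R⁻¹) ∧
    ∀ (v : Fin J → ℝ) (y : Fin d → ℝ),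
      (1 + P * Hᵀ * R⁻¹ * H) *ᵥ
          (v + (P * Hᵀ * (H * P * Hᵀ + R)⁻¹) *ᵥ (y - H *ᵥ v))
        = v + (P * Hᵀ * R⁻¹) *ᵥ y := by
  have hHPHt : (H * P * Hᵀ).PosSemidef := by
    simpa using hP.mul_mul_conjTranspose_same H
  have hS : (H * P * Hᵀ + R).PosDef := Matrix.PosDef.posSemidef_add hHPHt hR
  have hSu : IsUnit (H * P * Hᵀ + R) := hS.isUnit
  have hRu : IsUnit R := hR.isUnit
  have hRinv : IsUnit R⁻¹ := isUnit_nonsing_inv_iff.2 hRu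
  -- invertibility of 1 + P Hᵀ R⁻¹ H
  have hdet : (1 + P * Hᵀ * R⁻¹ * H).det = ((H * P * Hᵀ + R) * R⁻¹).det := by
    rw [show (1 : Matrix (Fin J) (Fin J) ℝ) + P * Hᵀ * R⁻¹ * H
        = 1 + (P * Hᵀ * R⁻¹) * H by noncomm_ring, det_one_add_mul_comm]
    congr 1
    rw [add_mul, Matrix.mul_nonsing_inv _ ((isUnit_iff_isUnit_det _).1 hRu)]
    simp only [Matrix.mul_assoc]
    exact add_comm _ _
  have hAu : IsUnit (1 + P * Hᵀ * R⁻¹ * H) := by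
    rw [isUnit_iff_isUnit_det, hdet, det_mul]
    exact (((isUnit_iff_isUnit_det _).1 hSu).mul ((isUnit_iff_isUnit_det _).1 hRinv))
  -- key identity: (1 + P Hᵀ R⁻¹ H) * (P Hᵀ) = (P Hᵀ R⁻¹) * (H P Hᵀ + R)
  have hkey : (1 + P * Hᵀ * R⁻¹ * H) * (P * Hᵀ) = (P * Hᵀ * R⁻¹) * (H * P * Hᵀ + R) := by
    have : P * Hᵀ * R⁻¹ * R = P * Hᵀ := by
      rw [Matrix.mul_assoc (P * Hᵀ), Matrix.nonsing_inv_mul _ ((isUnit_iff_isUnit_det _).1 hRu),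
        Matrix.mul_one]
    rw [Matrix.mul_add, this, Matrix.add_mul, Matrix.one_mul, add_comm]
    simp only [Matrix.mul_assoc]
  have hmain : P * Hᵀ * (H * P * Hᵀ + R)⁻¹ = (1 + P * Hᵀ * R⁻¹ * H)⁻¹ * (P * Hᵀ * R⁻¹) := by
    have h1 : (1 + P * Hᵀ * R⁻¹ * H) * (P * Hᵀ * (H * P * Hᵀ + R)⁻¹)
        = P * Hᵀ * R⁻¹ := by
      rw [← Matrix.mul_assoc, hkey, Matrix.mul_assoc,
        Matrix.mul_nonsing_inv _ ((isUnit_iff_isUnit_det _).1 hSu), Matrix.mul_one]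
    calc P * Hᵀ * (H * P * Hᵀ + R)⁻¹
        = (1 + P * Hᵀ * R⁻¹ * H)⁻¹ * ((1 + P * Hᵀ * R⁻¹ * H) * (P * Hᵀ * (H * P * Hᵀ + R)⁻¹)) := by
          rw [← Matrix.mul_assoc,
            Matrix.nonsing_inv_mul _ ((isUnit_iff_isUnit_det _).1 hAu), Matrix.one_mul]
      _ = (1 + P * Hᵀ * R⁻¹ * H)⁻¹ * (P * Hᵀ * R⁻¹) := by rw [h1]
  refine ⟨hSu, hAu, hmain, fun v y => ?_⟩
  have hAK : (1 + P * Hᵀ * R⁻¹ * H) * (P * Hᵀ * (H * P * Hᵀ + R)⁻¹) = P * Hᵀ * R⁻¹ := by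
    rw [hmain, ← Matrix.mul_assoc,
      Matrix.mul_nonsing_inv _ ((isUnit_iff_isUnit_det _).1 hAu), Matrix.one_mul]
  rw [mulVec_add, mulVec_mulVec, hAK]
  rw [add_mulVec, one_mulVec, mulVec_sub, mulVec_mulVec, Matrix.mul_assoc]
  abel
end

section
/- Let a > 0 and b ∈ ℝ with b² > 1 + 2a, and let A be the 2×2 real matrix with first row (a, 0) and second row (b, 0). Then the eigenvalues of A are exactly 0 and a (so A has nonnegative spectrum), I₂ + A is invertible, and the operator norm of (I₂ + A)⁻¹A (with respect to the Euclidean norm on ℝ²) equals √(a² + b²)/(1 + a), which is strictly greater than 1. -/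
/-- The operator norm of a square real matrix, acting on `ℝ^J` with the
Euclidean norm. -/
noncomputable def matOpNorm {J : ℕ} (M : Matrix (Fin J) (Fin J) ℝ) : ℝ :=
  ‖(LinearMap.toContinuousLinearMap (Matrix.toEuclideanLin M) :
      EuclideanSpace ℝ (Fin J) →L[ℝ] EuclideanSpace ℝ (Fin J))‖

lemma matOpNorm_col (c d : ℝ) :
    matOpNorm !![c, 0; d, 0] = Real.sqrt (c ^ 2 + d ^ 2) := by
  unfold matOpNorm
  set f := (LinearMap.toContinuousLinearMap (Matrix.toEuclideanLin !![c, 0; d, 0]) :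
      EuclideanSpace ℝ (Fin 2) →L[ℝ] EuclideanSpace ℝ (Fin 2)) with hf
  have happ : ∀ x : EuclideanSpace ℝ (Fin 2), f x 0 = c * x 0 ∧ f x 1 = d * x 0 := by
    intro x
    constructor <;>
    · show Matrix.toEuclideanLin _ x _ = _
      simp [Matrix.toEuclideanLin_apply, Matrix.mulVec, dotProduct, Fin.sum_univ_two]
  have hnorm : ∀ x : EuclideanSpace ℝ (Fin 2), ‖f x‖ = Real.sqrt (c^2 + d^2) * |x 0| := by
    intro x
    rw [EuclideanSpace.norm_eq, Fin.sum_univ_two, (happ x).1, (happ x).2]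
    rw [← Real.sqrt_sq_eq_abs, ← Real.sqrt_mul (by positivity)]
    congr 1
    simp only [Real.norm_eq_abs, abs_mul, mul_pow, sq_abs]
    ring
  apply le_antisymm
  · apply ContinuousLinearMap.opNorm_le_bound _ (Real.sqrt_nonneg _)
    intro x
    rw [hnorm x]
    gcongr
    rw [EuclideanSpace.norm_eq, Fin.sum_univ_two, ← Real.sqrt_sq_eq_abs]
    apply Real.sqrt_le_sqrt
    simp [Real.norm_eq_abs, sq_abs]
    positivity
  · have h1 : ‖(EuclideanSpace.single 0 1 : EuclideanSpace ℝ (Fin 2))‖ = 1 := by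
      simp [EuclideanSpace.norm_single]
    have := ContinuousLinearMap.le_opNorm f (EuclideanSpace.single 0 1)
    rw [hnorm, h1, mul_one] at this
    simpa using this

theorem counterexample_antisymmetric (a b : ℝ) (ha : 0 < a) (hb : 1 + 2 * a < b ^ 2) :
    spectrum ℝ (!![a, 0; b, 0]) = {0, a} ∧
    IsUnit (1 + !![a, 0; b, 0]) ∧
    matOpNorm ((1 + !![a, 0; b, 0])⁻¹ * !![a, 0; b, 0])
      = Real.sqrt (a ^ 2 + b ^ 2) / (1 + a) ∧
    1 < Real.sqrt (a ^ 2 + b ^ 2) / (1 + a) := by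
  have h1a : (0:ℝ) < 1 + a := by linarith
  have h1a' : (1:ℝ) + a ≠ 0 := ne_of_gt h1a
  have hu : IsUnit (1 + !![a, 0; b, 0]) := by
    rw [Matrix.isUnit_iff_isUnit_det, isUnit_iff_ne_zero]
    have : (1 + !![a, 0; b, 0]) = !![1 + a, 0; b, 1] := by
      rw [Matrix.one_fin_two]; norm_num
    rw [this, Matrix.det_fin_two_of]; simpa using h1a'
  refine ⟨?_, hu, ?_, ?_⟩
  · ext x
    have halg : (algebraMap ℝ (Matrix (Fin 2) (Fin 2) ℝ)) x = !![x, 0; 0, x] := by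
      ext i j
      fin_cases i <;> fin_cases j <;> simp [Matrix.algebraMap_matrix_apply]
    rw [Set.mem_insert_iff, Set.mem_singleton_iff, spectrum.mem_iff, halg,
      Matrix.isUnit_iff_isUnit_det]
    have hdet : (!![x, 0; 0, x] - !![a, 0; b, 0]).det = x * (x - a) := by
      simp [Matrix.det_fin_two]
      ring
    rw [hdet, isUnit_iff_ne_zero, not_ne_iff, mul_eq_zero, sub_eq_zero]
  · have hB : (1 + !![a, 0; b, 0])⁻¹ * !![a, 0; b, 0]
        = !![a/(1+a), 0; b/(1+a), 0] := by
      have key : (1 + !![a, 0; b, 0]) * !![a/(1+a), 0; b/(1+a), 0] = !![a, 0; b, 0] := by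
        rw [Matrix.one_fin_two]
        ext i j
        fin_cases i <;> fin_cases j <;>
          simp [Matrix.mul_apply, Fin.sum_univ_two] <;> field_simp <;> ring
      calc (1 + !![a, 0; b, 0])⁻¹ * !![a, 0; b, 0]
          = (1 + !![a, 0; b, 0])⁻¹ * ((1 + !![a, 0; b, 0]) * !![a/(1+a), 0; b/(1+a), 0]) := by
            rw [key]
        _ = !![a/(1+a), 0; b/(1+a), 0] := by
            rw [← mul_assoc,
              Matrix.nonsing_inv_mul _ ((Matrix.isUnit_iff_isUnit_det _).mp hu), one_mul]
    rw [hB, matOpNorm_col]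
    have : (a/(1+a))^2 + (b/(1+a))^2 = (a^2 + b^2) / (1+a)^2 := by
      field_simp
    rw [this, Real.sqrt_div' _ (by positivity), Real.sqrt_sq h1a.le]
  · rw [lt_div_iff₀ h1a, one_mul, show (1:ℝ) + a = Real.sqrt ((1+a)^2) from (Real.sqrt_sq h1a.le).symm]
    apply Real.sqrt_lt_sqrt (by positivity)
    nlinarith
end

section
/- Let N ∈ ℕ, r > 0, and let a₁, b₁, b₂ ∈ [0, 1) and Θ ∈ (0, 1], and set θ = max{Θ·a₁ + b₁, Θ + b₂}; assume θ < 1. Suppose (p_n)_{n≥0}, (q_n)_{n≥0}, (p̂_n)_{n≥1}, (q̂_n)_{n≥1} are sequences of nonnegative real numbers satisfying, for every n ≥ 1: q̂_n ≤ a₁·p_{n−1} + q_{n−1}, p̂_n ≤ b₁·p_{n−1} + b₂·q_{n−1}, q_n ≤ Θ·q̂_n + 2Nr², and p_n ≤ p̂_n + 2Nr². Then for every n ≥ 1, p_n + q_n ≤ θⁿ·(p₀ + q₀) + 4Nr²·(1 − θⁿ)/(1 − θ). -/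
theorem po_error_recursion (N : ℕ) (r : ℝ) (hr : 0 < r)
    (a1 b1 b2 : ℝ) (ha1 : 0 ≤ a1) (ha1' : a1 < 1) (hb1 : 0 ≤ b1) (hb1' : b1 < 1)
    (hb2 : 0 ≤ b2) (hb2' : b2 < 1) (Θ : ℝ) (hΘ : 0 < Θ) (hΘ' : Θ ≤ 1)
    (θ : ℝ) (hθdef : θ = max (Θ * a1 + b1) (Θ + b2)) (hθ : θ < 1)
    (p q : ℕ → ℝ) (phat qhat : ℕ → ℝ)
    (hp : ∀ n, 0 ≤ p n) (hq : ∀ n, 0 ≤ q n)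
    (hphat : ∀ n, 1 ≤ n → 0 ≤ phat n) (hqhat : ∀ n, 1 ≤ n → 0 ≤ qhat n)
    (hqhatrec : ∀ n, 1 ≤ n → qhat n ≤ a1 * p (n - 1) + q (n - 1))
    (hphatrec : ∀ n, 1 ≤ n → phat n ≤ b1 * p (n - 1) + b2 * q (n - 1))
    (hqrec : ∀ n, 1 ≤ n → q n ≤ Θ * qhat n + 2 * N * r ^ 2)
    (hprec : ∀ n, 1 ≤ n → p n ≤ phat n + 2 * N * r ^ 2) :
    ∀ n, 1 ≤ n →
      p n + q n ≤ θ ^ n * (p 0 + q 0) + 4 * N * r ^ 2 * (1 - θ ^ n) / (1 - θ) := by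
  have hc : (0:ℝ) ≤ 4 * N * r ^ 2 := by positivity
  have hθ0 : 0 ≤ θ := by
    rw [hθdef]; exact le_max_of_le_right (by linarith)
  have h1θ : 0 < 1 - θ := by linarith
  have key : ∀ n, 1 ≤ n → p n + q n ≤ θ * (p (n-1) + q (n-1)) + 4 * N * r ^ 2 := by
    intro n hn
    have h1 := hqrec n hn
    have h2 := hprec n hn
    have h3 := hqhatrec n hn
    have h4 := hphatrec n hn
    have hθ1 : Θ * a1 + b1 ≤ θ := hθdef ▸ le_max_left _ _
    have hθ2 : Θ + b2 ≤ θ := hθdef ▸ le_max_right _ _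
    nlinarith [hp (n-1), hq (n-1), mul_le_mul_of_nonneg_left h3 hΘ.le]
  refine Nat.le_induction ?_ ?_
  · have := key 1 le_rfl
    simp only [show (1:ℕ) - 1 = 0 from rfl] at this
    have heq : 4 * N * r ^ 2 * (1 - θ ^ 1) / (1 - θ) = 4 * N * r ^ 2 := by
      rw [pow_one]; field_simp
    rw [heq, pow_one]
    linarith
  · intro n hn ih
    have hk := key (n+1) (by omega)
    simp only [Nat.add_sub_cancel] at hk
    have h2 : θ * (p n + q n) ≤ θ * (θ ^ n * (p 0 + q 0) + 4 * N * r ^ 2 * (1 - θ ^ n) / (1 - θ)) :=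
      mul_le_mul_of_nonneg_left ih hθ0
    have heq : θ * (θ ^ n * (p 0 + q 0) + 4 * N * r ^ 2 * (1 - θ ^ n) / (1 - θ)) + 4 * N * r ^ 2
        = θ ^ (n+1) * (p 0 + q 0) + 4 * N * r ^ 2 * (1 - θ ^ (n+1)) / (1 - θ) := by
      rw [pow_succ]; field_simp; ring
    linarith
end
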